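/- Let G be a finite simple graph and k a natural number. Construct a monotone 2-CNF φ over variables {x_v, y_v : v ∈ V(G)} with clauses x_u ∨ x_v and y_u ∨ y_v for every edge uv ∈ E(G), and x_u ∨ y_v for every pair u, v ∈ V(G). Then G has an independent set of size at least k if and only if φ has two satisfying assignments that differ on at least 2k variables. -/

import Mathlib

theorem independent_set_iff_max_differ_2sat
    {V : Type*} [Fintype V] [DecidableEq V]
    (G : SimpleGraph V) (k : ℕ) :
    (∃ X : Finset V, k ≤ X.card ∧ ∀ u ∈ X, ∀ v ∈ X, ¬G.Adj u v) ↔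
    (∃ σ₁ σ₂ : V ⊕ V → Bool,
      ((∀ u v, G.Adj u v → σ₁ (Sum.inl u) = true ∨ σ₁ (Sum.inl v) = true) ∧
       (∀ u v, G.Adj u v → σ₁ (Sum.inr u) = true ∨ σ₁ (Sum.inr v) = true) ∧
       (∀ u v : V, σ₁ (Sum.inl u) = true ∨ σ₁ (Sum.inr v) = true)) ∧
      ((∀ u v, G.Adj u v → σ₂ (Sum.inl u) = true ∨ σ₂ (Sum.inl v) = true) ∧
       (∀ u v, G.Adj u v → σ₂ (Sum.inr u) = true ∨ σ₂ (Sum.inr v) = true) ∧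
       (∀ u v : V, σ₂ (Sum.inl u) = true ∨ σ₂ (Sum.inr v) = true)) ∧
      2 * k ≤ (Finset.univ.filter (fun z : V ⊕ V => σ₁ z ≠ σ₂ z)).card) := by
  constructor
  · rintro ⟨X, hk, hind⟩
    refine ⟨fun z => match z with
        | Sum.inl _ => true
        | Sum.inr v => decide (v ∉ X),
      fun z => match z with
        | Sum.inl v => decide (v ∉ X)
        | Sum.inr _ => true, ⟨?_, ?_, ?_⟩, ⟨?_, ?_, ?_⟩, ?_⟩
    · intro u v _; left; rfl
    · intro u v huv
      by_cases hu : u ∈ X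
      · right; simp only [decide_eq_true_eq]; exact fun hv => hind u hu v hv huv
      · left; simp [hu]
    · intro u v; left; rfl
    · intro u v huv
      by_cases hu : u ∈ X
      · right; simp only [decide_eq_true_eq]; exact fun hv => hind u hu v hv huv
      · left; simp [hu]
    · intro u v _; right; rfl
    · intro u v; right; rfl
    · have hsub : (X.image Sum.inl ∪ X.image Sum.inr : Finset (V ⊕ V)) ⊆
          Finset.univ.filter (fun z : V ⊕ V => (match z with
            | Sum.inl _ => true
            | Sum.inr v => decide (v ∉ X)) ≠ (match z with
            | Sum.inl v => decide (v ∉ X)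
            | Sum.inr _ => true)) := by
        intro z hz
        simp only [Finset.mem_union, Finset.mem_image] at hz
        rcases hz with ⟨v, hv, rfl⟩ | ⟨v, hv, rfl⟩ <;> simp [hv]
      have hcard : (X.image Sum.inl ∪ X.image Sum.inr : Finset (V ⊕ V)).card = 2 * X.card := by
        rw [Finset.card_union_of_disjoint, Finset.card_image_of_injective _ Sum.inl_injective,
          Finset.card_image_of_injective _ Sum.inr_injective]
        · ring
        · simp [Finset.disjoint_left]
      calc 2 * k ≤ 2 * X.card := by omega
        _ = _ := hcard.symm
        _ ≤ _ := Finset.card_le_card hsub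
  · rintro ⟨σ₁, σ₂, ⟨h1x, h1y, h1p⟩, ⟨h2x, h2y, h2p⟩, hcard⟩
    set A₁ := Finset.univ.filter (fun v : V => σ₁ (Sum.inl v) = false ∧ σ₂ (Sum.inl v) = true) with hA₁
    set A₂ := Finset.univ.filter (fun v : V => σ₁ (Sum.inl v) = true ∧ σ₂ (Sum.inl v) = false) with hA₂
    set B₁ := Finset.univ.filter (fun v : V => σ₁ (Sum.inr v) = false ∧ σ₂ (Sum.inr v) = true) with hB₁
    set B₂ := Finset.univ.filter (fun v : V => σ₁ (Sum.inr v) = true ∧ σ₂ (Sum.inr v) = false) with hB₂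
    -- decompose the differ set
    have hD : (Finset.univ.filter (fun z : V ⊕ V => σ₁ z ≠ σ₂ z)) =
        ((A₁ ∪ A₂).image Sum.inl ∪ (B₁ ∪ B₂).image Sum.inr) := by
      ext z
      cases z with
      | inl v =>
        simp only [Finset.mem_filter, Finset.mem_univ, true_and, Finset.mem_union,
          Finset.mem_image, hA₁, hA₂, hB₁, hB₂]
        constructor
        · intro h
          left
          refine ⟨v, ?_, rfl⟩
          cases h1 : σ₁ (Sum.inl v) <;> cases h2 : σ₂ (Sum.inl v) <;>
            simp_all
        · rintro (⟨w, hw, hwe⟩ | ⟨w, hw, hwe⟩)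
          · cases hwe; rcases hw with ⟨e1, e2⟩ | ⟨e1, e2⟩ <;> simp [e1, e2]
          · cases hwe
      | inr v =>
        simp only [Finset.mem_filter, Finset.mem_univ, true_and, Finset.mem_union,
          Finset.mem_image, hA₁, hA₂, hB₁, hB₂]
        constructor
        · intro h
          right
          refine ⟨v, ?_, rfl⟩
          cases h1 : σ₁ (Sum.inr v) <;> cases h2 : σ₂ (Sum.inr v) <;>
            simp_all
        · rintro (⟨w, hw, hwe⟩ | ⟨w, hw, hwe⟩)
          · cases hwe
          · cases hwe; rcases hw with ⟨e1, e2⟩ | ⟨e1, e2⟩ <;> simp [e1, e2]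
    have hdisjA : Disjoint A₁ A₂ := by
      simp only [Finset.disjoint_left, hA₁, hA₂, Finset.mem_filter]
      rintro a ⟨_, h1, h2⟩ ⟨_, h3, h4⟩; simp_all
    have hdisjB : Disjoint B₁ B₂ := by
      simp only [Finset.disjoint_left, hB₁, hB₂, Finset.mem_filter]
      rintro a ⟨_, h1, h2⟩ ⟨_, h3, h4⟩; simp_all
    have hsum : A₁.card + A₂.card + (B₁.card + B₂.card) ≥ 2 * k := by
      rw [hD] at hcard
      rw [Finset.card_union_of_disjoint, Finset.card_image_of_injective _ Sum.inl_injective,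
        Finset.card_image_of_injective _ Sum.inr_injective,
        Finset.card_union_of_disjoint hdisjA, Finset.card_union_of_disjoint hdisjB] at hcard
      · exact hcard
      · simp [Finset.disjoint_left]
    -- at most one of A₁, B₁ nonempty, likewise A₂, B₂
    have hAB1 : A₁ = ∅ ∨ B₁ = ∅ := by
      by_contra h
      push_neg at h
      obtain ⟨u, hu⟩ := h.1
      obtain ⟨w, hw⟩ := h.2
      simp only [hA₁, hB₁, Finset.mem_filter] at hu hw
      rcases h1p u w with h | h <;> simp_all
    have hAB2 : A₂ = ∅ ∨ B₂ = ∅ := by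
      by_contra h
      push_neg at h
      obtain ⟨u, hu⟩ := h.1
      obtain ⟨w, hw⟩ := h.2
      simp only [hA₂, hB₂, Finset.mem_filter] at hu hw
      rcases h2p u w with h | h <;> simp_all
    -- each of the four sets is independent
    have hiA₁ : ∀ u ∈ A₁, ∀ v ∈ A₁, ¬G.Adj u v := by
      intro u hu v hv hadj
      simp only [hA₁, Finset.mem_filter] at hu hv
      rcases h1x u v hadj with h | h <;> simp_all
    have hiA₂ : ∀ u ∈ A₂, ∀ v ∈ A₂, ¬G.Adj u v := by
      intro u hu v hv hadj
      simp only [hA₂, Finset.mem_filter] at hu hv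
      rcases h2x u v hadj with h | h <;> simp_all
    have hiB₁ : ∀ u ∈ B₁, ∀ v ∈ B₁, ¬G.Adj u v := by
      intro u hu v hv hadj
      simp only [hB₁, Finset.mem_filter] at hu hv
      rcases h1y u v hadj with h | h <;> simp_all
    have hiB₂ : ∀ u ∈ B₂, ∀ v ∈ B₂, ¬G.Adj u v := by
      intro u hu v hv hadj
      simp only [hB₂, Finset.mem_filter] at hu hv
      rcases h2y u v hadj with h | h <;> simp_all
    have hk : k ≤ A₁.card ∨ k ≤ A₂.card ∨ k ≤ B₁.card ∨ k ≤ B₂.card := by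
      rcases hAB1 with h | h <;> rcases hAB2 with h' | h' <;>
        simp only [h, h', Finset.card_empty] at hsum ⊢ <;> omega
    rcases hk with h | h | h | h
    exacts [⟨A₁, h, hiA₁⟩, ⟨A₂, h, hiA₂⟩, ⟨B₁, h, hiB₁⟩, ⟨B₂, h, hiB₂⟩]
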